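/- Let n ≥ 2 and k ≥ 1 be integers, let x ∈ ℕ^{n×n} be a symmetric matrix with x_{ij} ≤ log n for all i, j ∈ [n], and let z ∈ {1,…,k}^n. Then Γ(1/2)^{k(k+1)/2} · ∏_{1 ≤ a ≤ b ≤ k} [ ( o_{ab}(x,z) / n_{ab}(z) )^{o_{ab}(x,z)} · e^{−o_{ab}(x,z)} · ( n_{ab}(z) + 1 )^{o_{ab}(x,z) + 1/2} / Γ( o_{ab}(x,z) + 1/2 ) ] ≤ (n+1)^{k(k+1)}. -/

import Mathlib

open Finset

/-- `n_a(z)`: number of vertices in community `a`. -/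
def nCount {n k : ℕ} (z : Fin n → Fin k) (a : Fin k) : ℕ :=
  (Finset.univ.filter fun i => z i = a).card

/-- `n_{ab}(z)`: number of pairs of nodes in communities `a` and `b`
(`n_a n_b` for `a ≠ b`, `n_a² / 2` for `a = b`). -/
noncomputable def nPair {n k : ℕ} (z : Fin n → Fin k) (a b : Fin k) : ℝ :=
  if a = b then (nCount z a : ℝ) ^ 2 / 2 else (nCount z a : ℝ) * (nCount z b : ℝ)

/-- `o_{ab}(x,z)`: number of edges between communities `a` and `b`
(halved when `a = b`). -/
noncomputable def oCount {n k : ℕ} (x : Fin n → Fin n → ℕ) (z : Fin n → Fin k)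
    (a b : Fin k) : ℝ :=
  if a = b then (∑ i, ∑ j, if z i = a ∧ z j = a then (x i j : ℝ) else 0) / 2
  else ∑ i, ∑ j, if z i = a ∧ z j = b then (x i j : ℝ) else 0

open Real in

lemma entropy_ineq {t : ℝ} (h0 : 0 ≤ t) (h1 : t < 1) :
    (1+t) * Real.log (1+t) - (1-t) * Real.log (1-t) ≤ 2*t := by
  set f : ℝ → ℝ := fun s => 2*s - (1+s) * Real.log (1+s) + (1-s) * Real.log (1-s) with hf
  have hderiv : ∀ s ∈ Set.Ioo (-1:ℝ) 1,
      HasDerivAt f (-Real.log (1+s) - Real.log (1-s)) s := by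
    intro s hs
    have h1s : (1:ℝ) + s ≠ 0 := by nlinarith [hs.1, hs.2]
    have h2s : (1:ℝ) - s ≠ 0 := by nlinarith [hs.1, hs.2]
    have d1 : HasDerivAt (fun u : ℝ => 1 + u) 1 s := by
      simpa using (hasDerivAt_id s).const_add (1:ℝ)
    have d2 : HasDerivAt (fun u : ℝ => 1 - u) (-1) s := by
      exact (hasDerivAt_id' s).const_sub (1:ℝ)
    have l1 : HasDerivAt (fun u : ℝ => Real.log (1+u)) (1/(1+s)) s := by
      simpa [Function.comp_def] using (Real.hasDerivAt_log h1s).comp s d1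
    have l2 : HasDerivAt (fun u : ℝ => Real.log (1-u)) (-(1/(1-s))) s := by
      simpa [Function.comp_def] using (Real.hasDerivAt_log h2s).comp s d2
    have m1 : HasDerivAt (fun u : ℝ => (1+u) * Real.log (1+u))
        (1 * Real.log (1+s) + (1+s) * (1/(1+s))) s := d1.mul l1
    have m2 : HasDerivAt (fun u : ℝ => (1-u) * Real.log (1-u))
        ((-1) * Real.log (1-s) + (1-s) * (-(1/(1-s)))) s := d2.mul l2
    have dd : HasDerivAt f (2 * 1 - (1 * Real.log (1+s) + (1+s) * (1/(1+s)))
        + ((-1) * Real.log (1-s) + (1-s) * (-(1/(1-s))))) s := by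
      simpa [hf, Pi.add_def, Pi.sub_def] using (((hasDerivAt_id s).const_mul (2:ℝ)).sub m1).add m2
    convert dd using 1
    field_simp
    ring
  have hmono : MonotoneOn f (Set.Ico (0:ℝ) 1) := by
    have hconv : Convex ℝ (Set.Ico (0:ℝ) 1) := convex_Ico 0 1
    have hsub : Set.Ico (0:ℝ) 1 ⊆ Set.Ioo (-1:ℝ) 1 := fun y hy =>
      ⟨by linarith [hy.1], hy.2⟩
    apply monotoneOn_of_deriv_nonneg hconv
    · intro y hy
      exact (hderiv y (hsub hy)).continuousAt.continuousWithinAt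
    · intro y hy
      rw [interior_Ico] at hy
      exact (hderiv y (hsub (Set.mem_Ico.mpr ⟨hy.1.le, hy.2⟩))).differentiableAt.differentiableWithinAt
    · intro y hy
      rw [interior_Ico] at hy
      have hd := hderiv y (hsub (Set.mem_Ico.mpr ⟨hy.1.le, hy.2⟩))
      rw [hd.deriv]
      have hl1 : Real.log (1+y) + Real.log (1-y) ≤ 0 := by
        rw [← Real.log_mul (by nlinarith [hy.1]) (by nlinarith [hy.2])]
        apply Real.log_nonpos (by nlinarith [hy.1, hy.2]) (by nlinarith [hy.1, hy.2])
      linarith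
  have h0' : f 0 ≤ f t := hmono (by simp) (Set.mem_Ico.mpr ⟨h0, h1⟩) h0
  simp [hf] at h0'
  linarith

open Real in
lemma step_ineq {u : ℝ} (hu : 1/2 ≤ u) :
    (u+1) ^ (u+1 : ℝ) ≤ Real.exp 1 * ((u + 1/2) * u ^ (u : ℝ)) := by
  have hu0 : 0 < u := by linarith
  have hu2 : (0:ℝ) < 2*u+1 := by linarith
  set t : ℝ := 1/(2*u+1) with ht
  have ht0 : 0 < t := by positivity
  have ht1 : t < 1 := by
    rw [ht, div_lt_one hu2]; linarith
  have key := entropy_ineq ht0.le ht1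
  have e1 : (u + 1/2) * (1 + t) = u + 1 := by
    rw [ht]; field_simp; ring
  have e2 : (u + 1/2) * (1 - t) = u := by
    rw [ht]; field_simp; ring
  have e3 : (u + 1/2) * (2 * t) = 1 := by
    rw [ht]; field_simp
  have ht1' : (0:ℝ) < 1 + t := by linarith
  have ht2' : (0:ℝ) < 1 - t := by linarith
  have hu12 : (0:ℝ) < u + 1/2 := by linarith
  have hl1 : Real.log (1 + t) = Real.log (u+1) - Real.log (u+1/2) := by
    have hm := Real.log_mul hu12.ne' ht1'.ne'
    rw [e1] at hm; linarith
  have hl2 : Real.log (1 - t) = Real.log u - Real.log (u+1/2) := by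
    have hm := Real.log_mul hu12.ne' ht2'.ne'
    rw [e2] at hm; linarith
  have hmul : (u + 1/2) * ((1+t) * Real.log (1+t) - (1-t) * Real.log (1-t)) ≤ 1 := by
    calc (u + 1/2) * ((1+t) * Real.log (1+t) - (1-t) * Real.log (1-t))
        ≤ (u + 1/2) * (2*t) := mul_le_mul_of_nonneg_left key hu12.le
      _ = 1 := e3
  have hlog : (u+1) * Real.log (u+1) ≤ 1 + Real.log (u+1/2) + u * Real.log u := by
    have expand : (u + 1/2) * ((1+t) * Real.log (1+t) - (1-t) * Real.log (1-t))
        = (u+1) * Real.log (u+1) - u * Real.log u - Real.log (u+1/2) := by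
      rw [hl1, hl2]
      linear_combination (Real.log (u+1) - Real.log (u+1/2)) * e1
        - (Real.log u - Real.log (u+1/2)) * e2
    linarith [expand ▸ hmul]
  have lhs_eq : (u+1) ^ (u+1 : ℝ) = Real.exp ((u+1) * Real.log (u+1)) := by
    rw [Real.rpow_def_of_pos (by linarith), mul_comm]
  have rhs_eq : Real.exp 1 * ((u + 1/2) * u ^ (u : ℝ))
      = Real.exp (1 + Real.log (u+1/2) + u * Real.log u) := by
    rw [Real.exp_add, Real.exp_add, Real.rpow_def_of_pos hu0, mul_comm u (Real.log u),
      Real.exp_log hu12]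
    ring
  rw [lhs_eq, rhs_eq]
  exact Real.exp_le_exp.mpr hlog


open Real in
lemma gamma_lb : ∀ (j : ℕ) (u : ℝ), (u = 1/2 ∨ u = 1) →
    Real.sqrt π * (u+j) ^ (u+j : ℝ) * Real.exp (-(u+j)) ≤ Real.Gamma (u + j + 1/2) := by
  intro j
  induction j with
  | zero =>
    intro u hu
    rcases hu with rfl | rfl
    · norm_num
      have h1 : ((1:ℝ)/2) ^ ((1:ℝ)/2) = Real.sqrt (1/2) := by
        rw [Real.sqrt_eq_rpow]
      rw [h1, ← Real.sqrt_mul Real.pi_nonneg]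
      have h2 : Real.sqrt (π * (1/2)) ≤ Real.sqrt (Real.exp 1) := by
        apply Real.sqrt_le_sqrt
        nlinarith [Real.pi_le_four, Real.exp_one_gt_d9]
      have h3 : Real.sqrt (Real.exp 1) = Real.exp (1/2) := by
        rw [Real.sqrt_eq_rpow]; exact Real.exp_one_rpow (1/2)
      calc Real.sqrt (π * (1/2)) * Real.exp (-(1/2) : ℝ)
          ≤ Real.exp (1/2) * Real.exp (-(1/2) : ℝ) := by
            apply mul_le_mul_of_nonneg_right (h2.trans_eq h3) (Real.exp_pos _).le
        _ = 1 := by rw [← Real.exp_add]; norm_num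
    · norm_num
      rw [show (3/2 : ℝ) = 1/2 + 1 by norm_num, Real.Gamma_add_one (by norm_num),
        Real.Gamma_one_half_eq]
      have h2 : Real.exp (-1 : ℝ) ≤ 1/2 := by
        rw [Real.exp_neg, inv_eq_one_div]
        exact one_div_le_one_div_of_le (by norm_num) (by linarith [Real.exp_one_gt_d9])
      calc Real.sqrt π * Real.exp (-1 : ℝ) ≤ Real.sqrt π * (1/2) :=
            mul_le_mul_of_nonneg_left h2 (Real.sqrt_nonneg _)
        _ = 1/2 * Real.sqrt π := by ring
  | succ j ih =>
    intro u hu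
    have hs : 1/2 ≤ u + j := by
      rcases hu with rfl | rfl
      · simpa using le_add_of_nonneg_right (Nat.cast_nonneg j)
      · have : (0:ℝ) ≤ j := Nat.cast_nonneg j; linarith
    set s : ℝ := u + j with hsdef
    have hcast : u + (j+1 : ℕ) = s + 1 := by push_cast; ring
    rw [hcast, show s + 1 + 1/2 = (s + 1/2) + 1 by ring,
      Real.Gamma_add_one (by positivity)]
    have ihs := ih u hu
    have hee : Real.exp 1 * Real.exp (-1 : ℝ) = 1 := by
      rw [← Real.exp_add]; norm_num
    calc Real.sqrt π * (s+1) ^ (s+1 : ℝ) * Real.exp (-(s+1))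
        ≤ Real.sqrt π * (Real.exp 1 * ((s + 1/2) * s ^ (s:ℝ))) * Real.exp (-(s+1)) := by
          apply mul_le_mul_of_nonneg_right
            (mul_le_mul_of_nonneg_left (step_ineq hs) (Real.sqrt_nonneg _))
            (Real.exp_pos _).le
      _ = (s + 1/2) * (Real.sqrt π * s ^ (s:ℝ) * Real.exp (-s)) := by
          rw [show (-(s+1) : ℝ) = -1 + -s by ring, Real.exp_add]
          linear_combination (Real.sqrt π * ((s + 1/2) * s ^ (s:ℝ)) * Real.exp (-s)) * hee
      _ ≤ (s + 1/2) * Real.Gamma (s + 1/2) := by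
          apply mul_le_mul_of_nonneg_left ihs (by positivity)

open Real in
lemma pair_bound (n : ℕ) (hn : 2 ≤ n) (o N : ℝ) (hN0 : 0 ≤ N)
    (hhalf : ∃ m : ℕ, o = m / 2) (holeq : o ≤ N * Real.log n)
    (hNn : N ≤ (n:ℝ)^2) :
    Real.Gamma (1/2) * ((o / N) ^ (o : ℝ) * Real.exp (-o) * (N + 1) ^ (o + 1/2 : ℝ)
      / Real.Gamma (o + 1/2)) ≤ ((n:ℝ)+1)^2 := by
  obtain ⟨m, rfl⟩ := hhalf
  set o : ℝ := (m : ℝ) / 2 with hodef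
  have hn1 : (1:ℝ) < n := by
    have : (2:ℝ) ≤ n := by exact_mod_cast hn
    linarith
  have hnn : (0:ℝ) ≤ n := by linarith
  rcases Nat.eq_zero_or_pos m with rfl | hm
  · have ho0 : o = 0 := by simp [hodef]
    rw [ho0]
    rw [Real.rpow_zero, neg_zero, Real.exp_zero, zero_add]
    have hG : 0 < Real.Gamma (1/2 : ℝ) := Real.Gamma_pos_of_pos (by norm_num)
    rw [one_mul, one_mul]
    rw [mul_div_assoc', mul_comm, mul_div_assoc, div_self hG.ne', mul_one]
    calc (N + 1) ^ (1/2 : ℝ) ≤ (N + 1) ^ (1 : ℝ) :=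
          Real.rpow_le_rpow_of_exponent_le (by linarith) (by norm_num)
      _ = N + 1 := Real.rpow_one _
      _ ≤ ((n:ℝ)+1)^2 := by nlinarith
  · -- m ≥ 1, o ≥ 1/2
    have ho : (1/2 : ℝ) ≤ o := by
      rw [hodef]
      have : (1:ℝ) ≤ m := by exact_mod_cast hm
      linarith
    have ho0 : 0 < o := by linarith
    have hlogn : 0 < Real.log n := Real.log_pos hn1
    have hNpos : 0 < N := by
      by_contra h
      push_neg at h
      nlinarith
    -- Gamma lower bound
    have hgam : Real.sqrt π * o ^ (o:ℝ) * Real.exp (-o) ≤ Real.Gamma (o + 1/2) := by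
      rcases Nat.even_or_odd m with ⟨l, hl⟩ | ⟨l, hl⟩
      · have hl1 : 1 ≤ l := by omega
        have hoeq : o = 1 + ((l - 1 : ℕ) : ℝ) := by
          rw [hodef, hl]
          have : ((l - 1 : ℕ) : ℝ) = (l:ℝ) - 1 := by
            push_cast [Nat.cast_sub hl1]; ring
          rw [this]; push_cast; ring
        rw [hoeq]
        exact gamma_lb (l-1) 1 (Or.inr rfl)
      · have hoeq : o = 1/2 + (l : ℝ) := by
          rw [hodef, hl]; push_cast; ring
        rw [hoeq]
        exact gamma_lb l (1/2) (Or.inl rfl)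
    have hLB : 0 < Real.sqrt π * o ^ (o:ℝ) * Real.exp (-o) := by
      have := Real.rpow_pos_of_pos ho0 (o:ℝ)
      have := Real.sqrt_pos.mpr Real.pi_pos
      positivity
    have hGpos : 0 < Real.Gamma (o + 1/2) := Real.Gamma_pos_of_pos (by linarith)
    have hA : 0 ≤ (o / N) ^ (o : ℝ) * Real.exp (-o) * (N + 1) ^ (o + 1/2 : ℝ) := by
      positivity
    have hG12 : Real.Gamma (1/2 : ℝ) = Real.sqrt π := Real.Gamma_one_half_eq
    have step1 : Real.Gamma (1/2) * ((o / N) ^ (o : ℝ) * Real.exp (-o) * (N + 1) ^ (o + 1/2 : ℝ)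
        / Real.Gamma (o + 1/2))
        ≤ Real.Gamma (1/2) * ((o / N) ^ (o : ℝ) * Real.exp (-o) * (N + 1) ^ (o + 1/2 : ℝ)
        / (Real.sqrt π * o ^ (o:ℝ) * Real.exp (-o))) := by
      have hGh : 0 ≤ Real.Gamma (1/2 : ℝ) := (Real.Gamma_pos_of_pos (by norm_num)).le
      apply mul_le_mul_of_nonneg_left _ hGh
      exact div_le_div_of_nonneg_left hA hLB hgam
    have step2 : Real.Gamma (1/2) * ((o / N) ^ (o : ℝ) * Real.exp (-o) * (N + 1) ^ (o + 1/2 : ℝ)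
        / (Real.sqrt π * o ^ (o:ℝ) * Real.exp (-o)))
        = ((N+1)/N) ^ (o:ℝ) * (N+1) ^ (1/2 : ℝ) := by
      rw [hG12]
      rw [Real.div_rpow ho0.le hNpos.le, Real.div_rpow (by linarith : (0:ℝ) ≤ N+1) hNpos.le,
        Real.rpow_add (by linarith : (0:ℝ) < N+1)]
      have h1 : o ^ (o:ℝ) ≠ 0 := (Real.rpow_pos_of_pos ho0 _).ne'
      have h2 : N ^ (o:ℝ) ≠ 0 := (Real.rpow_pos_of_pos hNpos _).ne'
      have h3 : Real.exp (-o) ≠ 0 := (Real.exp_pos _).ne'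
      have h4 : Real.sqrt π ≠ 0 := (Real.sqrt_pos.mpr Real.pi_pos).ne'
      field_simp
    have step3 : ((N+1)/N) ^ (o:ℝ) ≤ (n:ℝ) := by
      have hb : (N+1)/N ≤ Real.exp (1/N) := by
        have h := Real.add_one_le_exp (1/N)
        rw [add_div, div_self hNpos.ne']
        linarith
      calc ((N+1)/N) ^ (o:ℝ) ≤ (Real.exp (1/N)) ^ (o:ℝ) :=
            Real.rpow_le_rpow (by positivity) hb ho0.le
        _ = Real.exp (1/N * o) := (Real.exp_mul _ _).symm
        _ ≤ Real.exp (Real.log n) := by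
            apply Real.exp_le_exp.mpr
            rw [one_div, inv_mul_eq_div, div_le_iff₀ hNpos]
            linarith [holeq]
        _ = (n:ℝ) := Real.exp_log (by linarith)
    have step4 : (N+1) ^ (1/2 : ℝ) ≤ (n:ℝ) + 1 := by
      have h1 : N + 1 ≤ ((n:ℝ)+1)^2 := by nlinarith
      calc (N+1) ^ (1/2 : ℝ) ≤ (((n:ℝ)+1)^2) ^ (1/2 : ℝ) :=
            Real.rpow_le_rpow (by linarith) h1 (by norm_num)
        _ = (n:ℝ) + 1 := by
            rw [← Real.rpow_natCast ((n:ℝ)+1) 2, ← Real.rpow_mul (by linarith)]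
            norm_num
    calc Real.Gamma (1/2) * ((o / N) ^ (o : ℝ) * Real.exp (-o) * (N + 1) ^ (o + 1/2 : ℝ)
            / Real.Gamma (o + 1/2))
        ≤ ((N+1)/N) ^ (o:ℝ) * (N+1) ^ (1/2 : ℝ) := step1.trans_eq step2
      _ ≤ (n:ℝ) * ((n:ℝ) + 1) := by
          apply mul_le_mul step3 step4 (by positivity) hnn
      _ ≤ ((n:ℝ)+1)^2 := by nlinarith

/-- bound on the ratio `Â(x,z)/A(x,z)` for good networks. -/
theorem ratio_A_bound (n k : ℕ) (hn : 2 ≤ n) (hk : 1 ≤ k)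
    (x : Fin n → Fin n → ℕ) (hsym : ∀ i j, x i j = x j i)
    (hx : ∀ i j, (x i j : ℝ) ≤ Real.log n) (z : Fin n → Fin k) :
    Real.Gamma (1 / 2) ^ (k * (k + 1) / 2) *
        ∏ a : Fin k, ∏ b ∈ Finset.univ.filter (fun b => a ≤ b),
          (oCount x z a b / nPair z a b) ^ (oCount x z a b) *
            Real.exp (-(oCount x z a b)) *
            (nPair z a b + 1) ^ (oCount x z a b + 1 / 2) /
            Real.Gamma (oCount x z a b + 1 / 2) ≤
      ((n : ℝ) + 1) ^ (k * (k + 1)) := by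
  have hn1 : (1:ℝ) < n := by
    have : (2:ℝ) ≤ n := by exact_mod_cast hn
    linarith
  have hlog0 : 0 ≤ Real.log n := (Real.log_pos hn1).le
  -- counting lemma
  have key : ∀ (a b : Fin k), (∑ i, ∑ j, if z i = a ∧ z j = b then (x i j:ℝ) else 0)
      ≤ (nCount z a : ℝ) * (nCount z b : ℝ) * Real.log n := by
    intro a b
    calc (∑ i, ∑ j, if z i = a ∧ z j = b then (x i j:ℝ) else 0)
        ≤ ∑ i, ∑ j, ((if z i = a then (1:ℝ) else 0) * ((if z j = b then (1:ℝ) else 0) * Real.log n)) := by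
          refine Finset.sum_le_sum fun i _ => Finset.sum_le_sum fun j _ => ?_
          by_cases h1 : z i = a <;> by_cases h2 : z j = b <;>
            simp [h1, h2, hx i j, Nat.cast_nonneg]
      _ = (∑ i, if z i = a then (1:ℝ) else 0) * (∑ j, (if z j = b then (1:ℝ) else 0) * Real.log n) :=
          (Finset.sum_mul_sum _ _ _ _).symm
      _ = (nCount z a : ℝ) * ((nCount z b : ℝ) * Real.log n) := by
          rw [← Finset.sum_mul, Finset.sum_boole, Finset.sum_boole]
          rfl
      _ = (nCount z a : ℝ) * (nCount z b : ℝ) * Real.log n := by ring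
  -- oCount is nonneg and a half-integer
  have ohalf : ∀ (a b : Fin k), ∃ m : ℕ, oCount x z a b = m / 2 := by
    intro a b
    unfold oCount
    split_ifs with h
    · refine ⟨∑ i, ∑ j, if z i = a ∧ z j = a then x i j else 0, ?_⟩
      push_cast
      rfl
    · refine ⟨2 * ∑ i, ∑ j, if z i = a ∧ z j = b then x i j else 0, ?_⟩
      push_cast
      rw [mul_comm, mul_div_assoc]
      norm_num
  have hN0 : ∀ (a b : Fin k), 0 ≤ nPair z a b := by
    intro a b
    unfold nPair
    split_ifs <;> positivity
  have holeq : ∀ (a b : Fin k), oCount x z a b ≤ nPair z a b * Real.log n := by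
    intro a b
    unfold oCount nPair
    split_ifs with h
    · subst h
      have := key a a
      have h2 : ((nCount z a : ℝ))^2 = (nCount z a : ℝ) * (nCount z a : ℝ) := sq (nCount z a : ℝ) ▸ by ring
      nlinarith [key a a]
    · calc (∑ i, ∑ j, if z i = a ∧ z j = b then (x i j:ℝ) else 0)
          ≤ (nCount z a : ℝ) * (nCount z b : ℝ) * Real.log n := key a b
        _ = (nCount z a : ℝ) * (nCount z b : ℝ) * Real.log n := rfl
  have hNn : ∀ (a b : Fin k), nPair z a b ≤ (n:ℝ)^2 := by
    intro a b
    have hcard : ∀ d : Fin k, (nCount z d : ℝ) ≤ n := by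
      intro d
      have h1 : nCount z d ≤ n := by
        have := Finset.card_filter_le (Finset.univ : Finset (Fin n)) (fun i => z i = d)
        simpa [nCount] using this
      exact_mod_cast h1
    have h0 : ∀ d : Fin k, (0:ℝ) ≤ (nCount z d : ℝ) := fun d => Nat.cast_nonneg _
    unfold nPair
    split_ifs with h
    · nlinarith [hcard a, h0 a, hn1]
    · nlinarith [hcard a, hcard b, h0 a, h0 b, hn1]
  -- per-pair bound
  have hpair : ∀ (a b : Fin k),
      Real.Gamma (1/2) * ((oCount x z a b / nPair z a b) ^ (oCount x z a b) *
        Real.exp (-(oCount x z a b)) * (nPair z a b + 1) ^ (oCount x z a b + 1/2) /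
        Real.Gamma (oCount x z a b + 1/2)) ≤ ((n:ℝ)+1)^2 := by
    intro a b
    exact pair_bound n hn _ _ (hN0 a b) (ohalf a b) (holeq a b) (hNn a b)
  have hterm_nonneg : ∀ (a b : Fin k),
      0 ≤ (oCount x z a b / nPair z a b) ^ (oCount x z a b) *
        Real.exp (-(oCount x z a b)) * (nPair z a b + 1) ^ (oCount x z a b + 1/2) /
        Real.Gamma (oCount x z a b + 1/2) := by
    intro a b
    obtain ⟨m, hm⟩ := ohalf a b
    have ho0 : 0 ≤ oCount x z a b := by rw [hm]; positivity
    have hGpos : 0 < Real.Gamma (oCount x z a b + 1/2) :=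
      Real.Gamma_pos_of_pos (by linarith)
    have h1 : 0 ≤ oCount x z a b / nPair z a b := div_nonneg ho0 (hN0 a b)
    apply div_nonneg _ hGpos.le
    have := Real.rpow_nonneg h1 (oCount x z a b)
    have := Real.rpow_nonneg (by linarith [hN0 a b] : (0:ℝ) ≤ nPair z a b + 1)
      (oCount x z a b + 1/2)
    positivity
  -- cardinality computation
  set c : Fin k → ℕ := fun a => (Finset.univ.filter fun b : Fin k => a ≤ b).card with hc
  have hcsum : 2 * (∑ a : Fin k, c a) = k * (k+1) := by
    have hca : ∀ a : Fin k, c a = k - a.val := by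
      intro a
      have he : (Finset.univ.filter fun b : Fin k => a ≤ b) = Finset.Ici a := by
        ext b; simp [Finset.mem_Ici]
      rw [hc]
      simp only [he, Fin.card_Ici]
    have h1 : (∑ a : Fin k, c a) = ∑ i ∈ Finset.range k, (k - i) := by
      rw [Finset.sum_congr rfl fun a _ => hca a]
      exact Fin.sum_univ_eq_sum_range (fun i => k - i) k
    have h3 : (∑ i ∈ Finset.range k, (k - i)) = ∑ i ∈ Finset.range k, (i + 1) := by
      rw [← Finset.sum_range_reflect (fun i => k - i) k]
      refine Finset.sum_congr rfl fun i hi => ?_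
      rw [Finset.mem_range] at hi
      omega
    have h4 : (∑ i ∈ Finset.range k, (i + 1)) = (∑ i ∈ Finset.range k, i) + k := by
      rw [Finset.sum_add_distrib]
      simp
    have h5 := Finset.sum_range_id_mul_two k
    have h6 : k * (k-1) + 2*k = k*(k+1) := by
      cases k with
      | zero => rfl
      | succ k' =>
        simp only [Nat.succ_sub_one]
        ring
    omega
  -- rewrite LHS as a double product
  have hexp : k * (k + 1) / 2 = ∑ a : Fin k, c a := by omega
  rw [hexp]
  rw [← Finset.prod_pow_eq_pow_sum, ← Finset.prod_mul_distrib]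
  have hrw : ∀ a : Fin k,
      Real.Gamma (1/2) ^ (c a) * ∏ b ∈ Finset.univ.filter (fun b => a ≤ b),
        ((oCount x z a b / nPair z a b) ^ (oCount x z a b) *
          Real.exp (-(oCount x z a b)) * (nPair z a b + 1) ^ (oCount x z a b + 1/2) /
          Real.Gamma (oCount x z a b + 1/2))
      = ∏ b ∈ Finset.univ.filter (fun b => a ≤ b),
        (Real.Gamma (1/2) * ((oCount x z a b / nPair z a b) ^ (oCount x z a b) *
          Real.exp (-(oCount x z a b)) * (nPair z a b + 1) ^ (oCount x z a b + 1/2) /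
          Real.Gamma (oCount x z a b + 1/2))) := by
    intro a
    rw [Finset.prod_mul_distrib, Finset.prod_const]
  calc (∏ a : Fin k, Real.Gamma (1/2) ^ (c a) *
          ∏ b ∈ Finset.univ.filter (fun b => a ≤ b),
            ((oCount x z a b / nPair z a b) ^ (oCount x z a b) *
              Real.exp (-(oCount x z a b)) * (nPair z a b + 1) ^ (oCount x z a b + 1/2) /
              Real.Gamma (oCount x z a b + 1/2)))
      = ∏ a : Fin k, ∏ b ∈ Finset.univ.filter (fun b => a ≤ b),
          (Real.Gamma (1/2) * ((oCount x z a b / nPair z a b) ^ (oCount x z a b) *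
            Real.exp (-(oCount x z a b)) * (nPair z a b + 1) ^ (oCount x z a b + 1/2) /
            Real.Gamma (oCount x z a b + 1/2))) := Finset.prod_congr rfl fun a _ => hrw a
    _ ≤ ∏ a : Fin k, ∏ b ∈ Finset.univ.filter (fun b => a ≤ b), ((n:ℝ)+1)^2 := by
        apply Finset.prod_le_prod
        · intro a _
          apply Finset.prod_nonneg
          intro b _
          exact mul_nonneg (Real.Gamma_pos_of_pos (by norm_num : (0:ℝ) < 1/2)).le
            (hterm_nonneg a b)
        · intro a _
          apply Finset.prod_le_prod
          · intro b _
            exact mul_nonneg (Real.Gamma_pos_of_pos (by norm_num : (0:ℝ) < 1/2)).le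
              (hterm_nonneg a b)
          · intro b _
            exact hpair a b
    _ = ((n:ℝ)+1) ^ (k*(k+1)) := by
        rw [Finset.prod_congr rfl fun a _ => Finset.prod_const (((n:ℝ)+1)^2)]
        rw [Finset.prod_pow_eq_pow_sum]
        rw [← pow_mul, hcsum]
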